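/- Let δ > 0, let Φ : [0, δ] → ℝ^{n×n} be continuous with ‖Φ(t)‖_F ≤ R₁ for all t ∈ [0, δ], where δ² R₁ ≤ 1, and let Ψ : [0, δ] → ℝ^{n×n} be twice continuously differentiable with Ψ''(t) = Φ(t)Ψ(t), Ψ(0) = 0 and Ψ'(0) = I. Then: (1) ‖(1/δ)Ψ(δ) − I‖_F ≤ 1/5, so in particular Ψ(δ) is invertible; and (2) |log det((1/δ)Ψ(δ)) − ∫₀^δ (t(δ − t)/δ) tr Φ(t) dt| ≤ (δ² R₁)²/10. -/

import Mathlib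

set_option maxHeartbeats 1000000

open Set Matrix

/-- The Frobenius norm of a real square matrix. -/
noncomputable def frobNorm {n : ℕ} (A : Matrix (Fin n) (Fin n) ℝ) : ℝ :=
  Real.sqrt (∑ i, ∑ j, (A i j) ^ 2)

namespace Frob

variable {n : ℕ}

lemma nonneg (A : Matrix (Fin n) (Fin n) ℝ) : 0 ≤ frobNorm A := Real.sqrt_nonneg _

lemma sum_sq_nonneg (A : Matrix (Fin n) (Fin n) ℝ) : 0 ≤ ∑ i, ∑ j, (A i j) ^ 2 :=
  Finset.sum_nonneg fun _ _ => Finset.sum_nonneg fun _ _ => sq_nonneg _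

lemma sq_eq (A : Matrix (Fin n) (Fin n) ℝ) : frobNorm A ^ 2 = ∑ i, ∑ j, (A i j) ^ 2 :=
  Real.sq_sqrt (sum_sq_nonneg A)

/-- Cauchy–Schwarz for double sums. -/
lemma cs_abs (f g : Fin n → Fin n → ℝ) :
    |∑ i, ∑ j, f i j * g i j| ≤
      Real.sqrt (∑ i, ∑ j, f i j ^ 2) * Real.sqrt (∑ i, ∑ j, g i j ^ 2) := by
  have h := Finset.sum_mul_sq_le_sq_mul_sq Finset.univ (fun p : Fin n × Fin n => f p.1 p.2)
    (fun p : Fin n × Fin n => g p.1 p.2)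
  simp_rw [Fintype.sum_prod_type] at h
  have h1 : |∑ i, ∑ j, f i j * g i j| =
      Real.sqrt ((∑ i, ∑ j, f i j * g i j) ^ 2) := (Real.sqrt_sq_eq_abs _).symm
  rw [h1, ← Real.sqrt_mul (Finset.sum_nonneg fun _ _ => Finset.sum_nonneg fun _ _ => sq_nonneg _)]
  exact Real.sqrt_le_sqrt h

lemma smul (c : ℝ) (A : Matrix (Fin n) (Fin n) ℝ) : frobNorm (c • A) = |c| * frobNorm A := by
  unfold frobNorm
  have : ∀ i j, ((c • A) i j) ^ 2 = c ^ 2 * (A i j) ^ 2 := by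
    intro i j; simp [Matrix.smul_apply, mul_pow]
  simp_rw [this, ← Finset.mul_sum]
  rw [Real.sqrt_mul (sq_nonneg c), Real.sqrt_sq_eq_abs]

lemma add_le (A B : Matrix (Fin n) (Fin n) ℝ) :
    frobNorm (A + B) ≤ frobNorm A + frobNorm B := by
  have key : ∀ (M : Matrix (Fin n) (Fin n) ℝ),
      frobNorm M = ‖(WithLp.equiv 2 (Fin n × Fin n → ℝ)).symm (fun p => M p.1 p.2)‖ := by
    intro M
    rw [EuclideanSpace.norm_eq]
    unfold frobNorm
    congr 1
    rw [show (∑ i : Fin n × Fin n,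
        ‖(WithLp.equiv 2 (Fin n × Fin n → ℝ)).symm (fun p => M p.1 p.2) i‖ ^ 2)
        = ∑ p : Fin n × Fin n, (M p.1 p.2) ^ 2 from Finset.sum_congr rfl fun p _ => by
          rw [WithLp.equiv_symm_apply, Real.norm_eq_abs, sq_abs]]
    rw [Fintype.sum_prod_type]
  rw [key, key, key]
  have : (WithLp.equiv 2 (Fin n × Fin n → ℝ)).symm (fun p => (A + B) p.1 p.2)
      = (WithLp.equiv 2 (Fin n × Fin n → ℝ)).symm (fun p => A p.1 p.2)
        + (WithLp.equiv 2 (Fin n × Fin n → ℝ)).symm (fun p => B p.1 p.2) := by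
    ext p
    simp [WithLp.equiv_symm_apply, Matrix.add_apply]
  rw [this]
  exact norm_add_le _ _

lemma sub_le (A B : Matrix (Fin n) (Fin n) ℝ) :
    frobNorm (A - B) ≤ frobNorm A + frobNorm B := by
  have := add_le A (-B)
  have hneg : frobNorm (-B) = frobNorm B := by
    have := smul (-1 : ℝ) B; simpa using this
  rw [sub_eq_add_neg]
  simpa [hneg] using this

lemma mul_le (A B : Matrix (Fin n) (Fin n) ℝ) :
    frobNorm (A * B) ≤ frobNorm A * frobNorm B := by
  unfold frobNorm
  rw [← Real.sqrt_mul (sum_sq_nonneg A)]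
  apply Real.sqrt_le_sqrt
  calc ∑ i, ∑ k, ((A * B) i k) ^ 2
      ≤ ∑ i, ∑ k, (∑ j, A i j ^ 2) * (∑ j, B j k ^ 2) := by
        refine Finset.sum_le_sum fun i _ => Finset.sum_le_sum fun k _ => ?_
        rw [Matrix.mul_apply]
        exact Finset.sum_mul_sq_le_sq_mul_sq Finset.univ _ _
    _ = (∑ i, ∑ j, A i j ^ 2) * (∑ j, ∑ k, B j k ^ 2) := by
        rw [← Finset.sum_mul_sum]
        rw [Finset.sum_comm (f := fun j k => B j k ^ 2)]

lemma abs_trace_mul_le (A B : Matrix (Fin n) (Fin n) ℝ) :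
    |(A * B).trace| ≤ frobNorm A * frobNorm B := by
  have htr : (A * B).trace = ∑ i, ∑ j, A i j * B j i := by
    simp [Matrix.trace, Matrix.diag, Matrix.mul_apply]
  rw [htr]
  have h := cs_abs (fun i j => A i j) (fun i j => B j i)
  refine h.trans (le_of_eq ?_)
  unfold frobNorm
  congr 2
  exact Finset.sum_comm

lemma abs_entry_le (A : Matrix (Fin n) (Fin n) ℝ) (i j : Fin n) : |A i j| ≤ frobNorm A := by
  rw [← Real.sqrt_sq_eq_abs]
  apply Real.sqrt_le_sqrt
  calc A i j ^ 2 ≤ ∑ j', A i j' ^ 2 :=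
        Finset.single_le_sum (f := fun j' => A i j' ^ 2) (fun _ _ => sq_nonneg _)
          (Finset.mem_univ j)
    _ ≤ ∑ i', ∑ j', A i' j' ^ 2 :=
        Finset.single_le_sum (f := fun i' => ∑ j', A i' j' ^ 2)
          (fun _ _ => Finset.sum_nonneg fun _ _ => sq_nonneg _) (Finset.mem_univ i)

lemma contOn {F : ℝ → Matrix (Fin n) (Fin n) ℝ} {s : Set ℝ}
    (hF : ∀ i j, ContinuousOn (fun t => F t i j) s) :
    ContinuousOn (fun t => frobNorm (F t)) s := by
  unfold frobNorm
  apply Real.continuous_sqrt.comp_continuousOn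
  apply continuousOn_finset_sum
  intro i _
  apply continuousOn_finset_sum
  intro j _
  exact (hF i j).pow 2


/-- `∫₀ᵗ (t-s) s^m ds = t^(m+2)/((m+1)(m+2))`. -/
lemma integral_tsub_pow (t : ℝ) (m : ℕ) :
    ∫ s in (0:ℝ)..t, (t - s) * s ^ m = t ^ (m + 2) / ((m + 1) * (m + 2)) := by
  have hm1 : ((m : ℝ) + 1) ≠ 0 := by positivity
  have hm2 : ((m : ℝ) + 2) ≠ 0 := by positivity
  have key : ∀ s : ℝ, HasDerivAt
      (fun x : ℝ => t / ((m : ℝ) + 1) * x ^ (m + 1) - 1 / ((m : ℝ) + 2) * x ^ (m + 2))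
      ((t - s) * s ^ m) s := by
    intro s
    have h1 := (hasDerivAt_pow (m + 1) s).const_mul (t / ((m : ℝ) + 1))
    have h2 := (hasDerivAt_pow (m + 2) s).const_mul ((1 : ℝ) / ((m : ℝ) + 2))
    have h := h1.sub h2
    refine h.congr_deriv ?_
    simp only [Nat.add_sub_cancel]
    push_cast
    field_simp
    ring
  rw [intervalIntegral.integral_eq_sub_of_hasDerivAt
    (fun s _ => key s)
    (((continuous_const.sub continuous_id).mul (continuous_pow m)).intervalIntegrable _ _)]
  rw [zero_pow (by omega : m + 1 ≠ 0), zero_pow (by omega : m + 2 ≠ 0)]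
  field_simp
  ring

/-- Frobenius norm of an entrywise interval integral is at most the integral of a bound. -/
lemma norm_integral_le {F : ℝ → Matrix (Fin n) (Fin n) ℝ} {a b : ℝ} (hab : a ≤ b)
    (hF : ∀ i j, ContinuousOn (fun s => F s i j) (Icc a b)) {bound : ℝ → ℝ}
    (hbd : ∀ s ∈ Icc a b, frobNorm (F s) ≤ bound s) (hbc : ContinuousOn bound (Icc a b)) :
    frobNorm (Matrix.of fun i j => ∫ s in a..b, F s i j) ≤ ∫ s in a..b, bound s := by
  have huIcc : uIcc a b = Icc a b := uIcc_of_le hab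
  have hFi : ∀ i j, IntervalIntegrable (fun s => F s i j) MeasureTheory.volume a b := by
    intro i j
    exact ((hF i j).mono (by rw [huIcc])).intervalIntegrable
  have hbi : IntervalIntegrable bound MeasureTheory.volume a b :=
    (hbc.mono (by rw [huIcc])).intervalIntegrable
  set M : Matrix (Fin n) (Fin n) ℝ := Matrix.of fun i j => ∫ s in a..b, F s i j with hM
  have hMapp : ∀ i j, M i j = ∫ s in a..b, F s i j := fun i j => rfl
  have hbnn : ∀ s ∈ Icc a b, 0 ≤ bound s := fun s hs => (nonneg (F s)).trans (hbd s hs)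
  have hint_nonneg : 0 ≤ ∫ s in a..b, bound s := by
    apply intervalIntegral.integral_nonneg hab hbnn
  rcases eq_or_lt_of_le (nonneg M) with h0 | h0
  · rw [← h0]; exact hint_nonneg
  -- N² ≤ N * ∫ bound
  have hsq : frobNorm M ^ 2 ≤ frobNorm M * ∫ s in a..b, bound s := by
    rw [sq_eq]
    have hGi : ∀ i, IntervalIntegrable (fun s => ∑ j, M i j * F s i j)
        MeasureTheory.volume a b := by
      intro i
      apply ContinuousOn.intervalIntegrable
      rw [huIcc]
      exact continuousOn_finset_sum _ fun j _ => continuousOn_const.mul (hF i j)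
    have step1 : (∑ i, ∑ j, M i j ^ 2) = ∫ s in a..b, ∑ i, ∑ j, M i j * F s i j := by
      have h1 : (∫ s in a..b, ∑ i, ∑ j, M i j * F s i j)
          = ∑ i, ∫ s in a..b, ∑ j, M i j * F s i j :=
        intervalIntegral.integral_finset_sum (fun i _ => hGi i)
      have h2 : ∀ i, (∫ s in a..b, ∑ j, M i j * F s i j)
          = ∑ j, ∫ s in a..b, M i j * F s i j := fun i =>
        intervalIntegral.integral_finset_sum (fun j _ => (hFi i j).const_mul _)
      rw [h1]
      refine Finset.sum_congr rfl fun i _ => ?_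
      rw [h2 i]
      refine Finset.sum_congr rfl fun j _ => ?_
      rw [intervalIntegral.integral_const_mul, ← hMapp, sq]
    rw [step1]
    have ptwise : ∀ s ∈ Icc a b, (∑ i, ∑ j, M i j * F s i j) ≤ frobNorm M * bound s := by
      intro s hs
      calc (∑ i, ∑ j, M i j * F s i j) ≤ |∑ i, ∑ j, M i j * F s i j| := le_abs_self _
        _ ≤ Real.sqrt (∑ i, ∑ j, M i j ^ 2) * Real.sqrt (∑ i, ∑ j, F s i j ^ 2) :=
            cs_abs _ _
        _ = frobNorm M * frobNorm (F s) := rfl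
        _ ≤ frobNorm M * bound s := by
            exact mul_le_mul_of_nonneg_left (hbd s hs) (nonneg M)
    calc (∫ s in a..b, ∑ i, ∑ j, M i j * F s i j)
        ≤ ∫ s in a..b, frobNorm M * bound s := by
          apply intervalIntegral.integral_mono_on hab _ (hbi.const_mul _) ptwise
          apply ContinuousOn.intervalIntegrable
          rw [huIcc]
          exact continuousOn_finset_sum _ fun i _ =>
            continuousOn_finset_sum _ fun j _ => continuousOn_const.mul (hF i j)
      _ = frobNorm M * ∫ s in a..b, bound s := intervalIntegral.integral_const_mul _ _
  nlinarith [hsq, h0]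

/-- `∫₀ᵗ (α (t-s)s^m + β (t-s)s^k) ds`. -/
lemma integral_two (t α β : ℝ) (m k : ℕ) :
    ∫ s in (0:ℝ)..t, (α * ((t - s) * s ^ m) + β * ((t - s) * s ^ k))
      = α * (t ^ (m + 2) / ((m + 1) * (m + 2))) + β * (t ^ (k + 2) / ((k + 1) * (k + 2))) := by
  have hi : ∀ l : ℕ, IntervalIntegrable (fun s => (t - s) * s ^ l)
      MeasureTheory.volume 0 t := fun l =>
    ((continuous_const.sub continuous_id).mul (continuous_pow l)).intervalIntegrable _ _
  rw [intervalIntegral.integral_add ((hi m).const_mul α) ((hi k).const_mul β),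
    intervalIntegral.integral_const_mul, intervalIntegral.integral_const_mul,
    integral_tsub_pow, integral_tsub_pow]

section unit
attribute [local instance] Matrix.frobeniusNormedAddCommGroup Matrix.frobeniusNormedRing

lemma frobNorm_eq_norm (A : Matrix (Fin n) (Fin n) ℝ) : frobNorm A = ‖A‖ := by
  rw [Matrix.frobenius_norm_def, ← Real.sqrt_eq_rpow]
  unfold frobNorm
  congr 1
  refine Finset.sum_congr rfl fun i _ => Finset.sum_congr rfl fun j _ => ?_
  rw [Real.rpow_two, Real.norm_eq_abs, sq_abs]

lemma isUnit_one_add (B : Matrix (Fin n) (Fin n) ℝ) (h : frobNorm B < 1) :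
    IsUnit (1 + B) := by
  haveI : CompleteSpace (Matrix (Fin n) (Fin n) ℝ) := FiniteDimensional.complete ℝ _
  haveI : @CompleteSpace (Matrix (Fin n) (Fin n) ℝ) PseudoMetricSpace.toUniformSpace := by
    exact this
  have h' : ‖-B‖ < 1 := by rwa [norm_neg, ← frobNorm_eq_norm]
  have := (Units.oneSub (-B) h').isUnit
  rwa [Units.val_oneSub, sub_neg_eq_add] at this

end unit

/-- derivative of `h ↦ det (1 + h • C)` at `0` is `trace C`. -/
lemma hasDerivAt_det_one_add (C : Matrix (Fin n) (Fin n) ℝ) :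
    HasDerivAt (fun h : ℝ => (1 + h • C).det) C.trace 0 := by
  set q := ((1 + (Polynomial.X : Polynomial ℝ) • C.map Polynomial.C).det).divX.divX with hq
  have hfun : (fun h : ℝ => (1 + h • C).det) = fun h : ℝ =>
      1 + C.trace * h + Polynomial.eval h q * h ^ 2 := by
    funext h
    exact Matrix.det_one_add_smul h C
  rw [hfun]
  have h1 : HasDerivAt (fun h : ℝ => 1 + C.trace * h) C.trace 0 := by
    simpa using (hasDerivAt_id (0:ℝ)).const_mul C.trace |>.const_add 1
  have h2 : HasDerivAt (fun h : ℝ => Polynomial.eval h q * h ^ 2) 0 0 := by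
    have ha := q.hasDerivAt (0:ℝ)
    have hb := hasDerivAt_pow 2 (0:ℝ)
    have := ha.mul hb
    simpa [Pi.mul_def] using this
  simpa [Pi.add_def] using h1.add h2

/-- derivative of `v ↦ det (1 + v • B)`. -/
lemma hasDerivAt_D (B : Matrix (Fin n) (Fin n) ℝ) (u : ℝ)
    (hu : IsUnit (1 + u • B).det) :
    HasDerivAt (fun v : ℝ => (1 + v • B).det)
      ((1 + u • B).det * ((1 + u • B)⁻¹ * B).trace) u := by
  set M := 1 + u • B with hM
  set C := M⁻¹ * B with hC
  have hMC : M * C = B := by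
    rw [hC, ← mul_assoc, Matrix.mul_nonsing_inv M hu, one_mul]
  have key : ∀ v : ℝ, 1 + v • B = M * (1 + (v - u) • C) := by
    intro v
    rw [mul_add, mul_one, Matrix.mul_smul, hMC, hM]
    rw [add_assoc, ← add_smul]
    ring_nf
  have hfun : (fun v : ℝ => (1 + v • B).det) = fun v => M.det * (1 + (v - u) • C).det := by
    funext v
    rw [key v, Matrix.det_mul]
  rw [hfun]
  have hshift : HasDerivAt (fun v : ℝ => (1 + (v - u) • C).det) C.trace u := by
    have hinner : HasDerivAt (fun v : ℝ => v - u) 1 u := (hasDerivAt_id u).sub_const u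
    have houter := hasDerivAt_det_one_add C
    have : (u : ℝ) - u = 0 := sub_self u
    have hcomp := HasDerivAt.comp u (this ▸ houter) hinner
    simpa [Function.comp_def] using hcomp
  simpa using hshift.const_mul M.det

lemma logdet_estimate {b : ℝ} (B : Matrix (Fin n) (Fin n) ℝ)
    (hB : frobNorm B ≤ b) (hb1 : b < 1) :
    IsUnit (1 + B) ∧ |Real.log (1 + B).det - B.trace| ≤ b ^ 2 / (2 * (1 - b)) := by
  have hb0 : 0 ≤ b := (nonneg B).trans hB
  -- invertibility for u ∈ [0,1]
  have hUnit : ∀ u ∈ Icc (0:ℝ) 1, IsUnit (1 + u • B) := by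
    intro u hu
    apply isUnit_one_add
    rw [smul, abs_of_nonneg hu.1]
    have : u * frobNorm B ≤ 1 * b := mul_le_mul hu.2 hB (nonneg B) zero_le_one
    linarith
  have hDet : ∀ u ∈ Icc (0:ℝ) 1, IsUnit (1 + u • B).det := fun u hu =>
    (Matrix.isUnit_iff_isUnit_det _).mp (hUnit u hu)
  have hDne : ∀ u ∈ Icc (0:ℝ) 1, (1 + u • B).det ≠ 0 := fun u hu =>
    (hDet u hu).ne_zero
  -- the logarithmic derivative
  set T : ℝ → ℝ := fun u => ((1 + u • B)⁻¹ * B).trace with hT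
  have hlogD : ∀ u ∈ Icc (0:ℝ) 1,
      HasDerivAt (fun v => Real.log ((1 + v • B).det)) (T u) u := by
    intro u hu
    have hD := hasDerivAt_D B u (hDet u hu)
    have hlog := Real.hasDerivAt_log (hDne u hu)
    have h5 := hlog.comp u hD
    have heq : (1 + u • B).det⁻¹ * ((1 + u • B).det * ((1 + u • B)⁻¹ * B).trace)
        = T u := inv_mul_cancel_left₀ (hDne u hu) _
    rw [← heq]
    exact h5
  -- continuity of T
  have hMcont : Continuous fun u : ℝ => 1 + u • B :=
    continuous_const.add (continuous_id.smul continuous_const)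
  have hTcont : ContinuousOn T (Icc (0:ℝ) 1) := by
    have hT2 : ∀ u : ℝ, T u = ((1 + u • B).det)⁻¹ * ((1 + u • B).adjugate * B).trace := by
      intro u
      show ((1 + u • B)⁻¹ * B).trace = _
      rw [Matrix.inv_def, Ring.inverse_eq_inv', Matrix.smul_mul, Matrix.trace_smul,
        smul_eq_mul]
    have hc : ContinuousOn
        (fun u : ℝ => ((1 + u • B).det)⁻¹ * ((1 + u • B).adjugate * B).trace)
        (Icc (0:ℝ) 1) := by
      apply ContinuousOn.mul
      · exact ContinuousOn.inv₀ (hMcont.matrix_det.continuousOn) hDne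
      · exact ((hMcont.matrix_adjugate.mul continuous_const).matrix_trace).continuousOn
    exact hc.congr fun u _ => hT2 u
  have hTint : IntervalIntegrable T MeasureTheory.volume 0 1 :=
    (hTcont.mono (by rw [uIcc_of_le zero_le_one])).intervalIntegrable
  -- FTC
  have hFTC : (∫ u in (0:ℝ)..1, T u) = Real.log ((1 + B).det) := by
    have := intervalIntegral.integral_eq_sub_of_hasDerivAt
      (f := fun v => Real.log ((1 + v • B).det)) (f' := T)
      (fun u hu => hlogD u (by rwa [uIcc_of_le zero_le_one] at hu)) hTint
    rw [this]
    simp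
  -- pointwise bound on |T u - trace B|
  have hptw : ∀ u ∈ Icc (0:ℝ) 1, |T u - B.trace| ≤ b ^ 2 / (1 - b) * u := by
    intro u hu
    set K := (1 + u • B)⁻¹ * B with hK
    have hMK : (1 + u • B) * K = B := by
      rw [hK, ← mul_assoc, Matrix.mul_nonsing_inv _ (hDet u hu), one_mul]
    have hKid : K = B - u • (B * K) := by
      have : K + u • (B * K) = B := by
        calc K + u • (B * K) = (1 + u • B) * K := by
              rw [add_mul, one_mul, Matrix.smul_mul]
          _ = B := hMK
      linear_combination (norm := module) this
    have hKnorm : frobNorm K ≤ b / (1 - b) := by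
      have h1 : frobNorm K ≤ b + b * frobNorm K := by
        calc frobNorm K = frobNorm (B - u • (B * K)) := by rw [← hKid]
          _ ≤ frobNorm B + frobNorm (u • (B * K)) := sub_le _ _
          _ = frobNorm B + u * frobNorm (B * K) := by
              rw [smul, abs_of_nonneg hu.1]
          _ ≤ b + 1 * (frobNorm B * frobNorm K) := by
              have := mul_le B K
              have h2 : u * frobNorm (B * K) ≤ 1 * (frobNorm B * frobNorm K) := by
                apply mul_le_mul hu.2 this (nonneg _)
                exact zero_le_one
              linarith
          _ ≤ b + b * frobNorm K := by
              have := mul_le_mul_of_nonneg_right hB (nonneg K)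
              linarith
      have hbpos : 0 < 1 - b := by linarith
      rw [le_div_iff₀ hbpos]
      linarith
    have h4 : K - B = -(u • (B * K)) := by
      nth_rewrite 1 [hKid]
      module
    have htr : T u - B.trace = -(u * (B * K).trace) := by
      have h5 : T u - B.trace = (K - B).trace := by
        show ((1 + u • B)⁻¹ * B).trace - B.trace = _
        rw [Matrix.trace_sub, hK]
      rw [h5, h4, Matrix.trace_neg, Matrix.trace_smul, smul_eq_mul]
    rw [htr, abs_neg, abs_mul, abs_of_nonneg hu.1]
    have h3 : |(B * K).trace| ≤ b * (b / (1 - b)) := by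
      calc |(B * K).trace| ≤ frobNorm B * frobNorm K := abs_trace_mul_le B K
        _ ≤ b * (b / (1 - b)) := by
            apply mul_le_mul hB hKnorm (nonneg K) hb0
    calc u * |(B * K).trace| ≤ u * (b * (b / (1 - b))) := by
          exact mul_le_mul_of_nonneg_left h3 hu.1
      _ = b ^ 2 / (1 - b) * u := by ring
  -- conclude
  refine ⟨by simpa using hUnit 1 (by norm_num), ?_⟩
  have habs : (∫ u in (0:ℝ)..1, (T u - B.trace)) = Real.log ((1 + B).det) - B.trace := by
    rw [intervalIntegral.integral_sub hTint intervalIntegrable_const, hFTC]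
    simp
  rw [← habs]
  have h1 : |∫ u in (0:ℝ)..1, (T u - B.trace)| ≤ ∫ u in (0:ℝ)..1, |T u - B.trace| :=
    intervalIntegral.abs_integral_le_integral_abs zero_le_one
  have h2 : (∫ u in (0:ℝ)..1, |T u - B.trace|) ≤ ∫ u in (0:ℝ)..1, b ^ 2 / (1 - b) * u := by
    apply intervalIntegral.integral_mono_on zero_le_one _ _ hptw
    · exact ((hTcont.sub continuousOn_const).abs.mono
        (by rw [uIcc_of_le zero_le_one])).intervalIntegrable
    · exact (continuous_const.mul continuous_id).intervalIntegrable _ _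
  have h3 : (∫ u in (0:ℝ)..1, b ^ 2 / (1 - b) * u) = b ^ 2 / (2 * (1 - b)) := by
    rw [intervalIntegral.integral_const_mul, integral_id]
    rw [show ((1:ℝ) ^ 2 - 0 ^ 2) / 2 = 1 / 2 by norm_num]
    rw [div_mul_div_comm, mul_one, mul_comm (1 - b) 2]
  linarith
end Frob

/-- Jacobian estimate for the Hamiltonian map, via the matrix ODE
`Ψ'' = Φ Ψ`, `Ψ(0) = 0`, `Ψ'(0) = I`. -/
theorem jacobian_determinant_estimate
    (n : ℕ) (δ R₁ : ℝ) (hδ : 0 < δ) (hδR : δ ^ 2 * R₁ ≤ 1)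
    (Φ Ψ Ψ' : ℝ → Matrix (Fin n) (Fin n) ℝ)
    (hΦcont : ∀ i j, ContinuousOn (fun t => Φ t i j) (Icc 0 δ))
    (hΦF : ∀ t ∈ Icc 0 δ, frobNorm (Φ t) ≤ R₁)
    (hΨ : ∀ t ∈ Icc 0 δ, ∀ i j, HasDerivAt (fun s => Ψ s i j) (Ψ' t i j) t)
    (hΨ' : ∀ t ∈ Icc 0 δ, ∀ i j, HasDerivAt (fun s => Ψ' s i j) ((Φ t * Ψ t) i j) t)
    (hΨ0 : Ψ 0 = 0) (hΨ'0 : Ψ' 0 = 1) :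
    frobNorm ((1/δ) • Ψ δ - 1) ≤ 1/5 ∧ IsUnit (Ψ δ) ∧
      |Real.log (((1/δ) • Ψ δ).det) -
          ∫ t in (0:ℝ)..δ, (t * (δ - t) / δ) * (Φ t).trace| ≤ (δ ^ 2 * R₁) ^ 2 / 10 := by
  have hδ0 : δ ≠ 0 := ne_of_gt hδ
  have hδmem : δ ∈ Icc (0:ℝ) δ := ⟨hδ.le, le_refl δ⟩
  have h0mem : (0:ℝ) ∈ Icc (0:ℝ) δ := ⟨le_refl 0, hδ.le⟩
  have hR₁ : 0 ≤ R₁ := (Frob.nonneg (Φ 0)).trans (hΦF 0 h0mem)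
  -- continuity of entries
  have hΨc : ∀ i j, ContinuousOn (fun t => Ψ t i j) (Icc 0 δ) := fun i j t ht =>
    (hΨ t ht i j).continuousAt.continuousWithinAt
  have hΨ'c : ∀ i j, ContinuousOn (fun t => Ψ' t i j) (Icc 0 δ) := fun i j t ht =>
    (hΨ' t ht i j).continuousAt.continuousWithinAt
  have hΦΨc : ∀ i j, ContinuousOn (fun s => (Φ s * Ψ s) i j) (Icc 0 δ) := by
    intro i j
    simp only [Matrix.mul_apply]
    exact continuousOn_finset_sum _ fun k _ => (hΦcont i k).mul (hΨc k j)
  have hΨm1c : ∀ i j, ContinuousOn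
      (fun s => (Ψ s - s • (1 : Matrix (Fin n) (Fin n) ℝ)) i j) (Icc 0 δ) := by
    intro i j
    simp only [Matrix.sub_apply, Matrix.smul_apply, smul_eq_mul]
    exact (hΨc i j).sub ((continuous_id.mul continuous_const).continuousOn)
  have hΦΨm1c : ∀ i j, ContinuousOn
      (fun s => (Φ s * (Ψ s - s • (1 : Matrix (Fin n) (Fin n) ℝ))) i j) (Icc 0 δ) := by
    intro i j
    simp only [Matrix.mul_apply]
    exact continuousOn_finset_sum _ fun k _ => (hΦcont i k).mul (hΨm1c k j)
  -- integral representation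
  have key : ∀ t ∈ Icc (0:ℝ) δ,
      Ψ t - t • (1 : Matrix (Fin n) (Fin n) ℝ)
        = Matrix.of fun i j => ∫ s in (0:ℝ)..t, (t - s) * ((Φ s * Ψ s) i j) := by
    intro t ht
    have hsub : Icc (0:ℝ) t ⊆ Icc (0:ℝ) δ := Icc_subset_Icc (le_refl 0) ht.2
    ext i j
    have hG : ∀ s ∈ uIcc (0:ℝ) t,
        HasDerivAt (fun s => (t - s) * Ψ' s i j + Ψ s i j)
          ((t - s) * ((Φ s * Ψ s) i j)) s := by
      intro s hs
      rw [uIcc_of_le ht.1] at hs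
      have hs' : s ∈ Icc (0:ℝ) δ := hsub hs
      have hd1 : HasDerivAt (fun s : ℝ => t - s) (-1) s := (hasDerivAt_id s).const_sub t
      have hd := (hd1.mul (hΨ' s hs' i j)).add (hΨ s hs' i j)
      exact hd.congr_deriv (by ring)
    have hint : IntervalIntegrable (fun s => (t - s) * ((Φ s * Ψ s) i j))
        MeasureTheory.volume 0 t := by
      apply ContinuousOn.intervalIntegrable
      rw [uIcc_of_le ht.1]
      exact (continuousOn_const.sub continuousOn_id).mul ((hΦΨc i j).mono hsub)
    have hFTC := intervalIntegral.integral_eq_sub_of_hasDerivAt hG hint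
    simp only [Matrix.sub_apply, Matrix.smul_apply, smul_eq_mul, Matrix.of_apply]
    rw [hFTC, hΨ0, hΨ'0]
    simp
  -- deviation from linear flow
  set h : ℝ → ℝ := fun t => frobNorm (Ψ t - t • (1 : Matrix (Fin n) (Fin n) ℝ)) with hh
  have hhc : ContinuousOn h (Icc 0 δ) := Frob.contOn hΨm1c
  have hh0 : ∀ t, 0 ≤ h t := fun t => Frob.nonneg _
  -- product norm bound
  have hprod : ∀ s ∈ Icc (0:ℝ) δ, frobNorm (Φ s * Ψ s) ≤ R₁ * (s + h s) := by
    intro s hs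
    have hdec : Φ s * Ψ s = s • Φ s + Φ s * (Ψ s - s • (1 : Matrix (Fin n) (Fin n) ℝ)) := by
      rw [mul_sub, Matrix.mul_smul, mul_one]
      abel
    rw [hdec]
    calc frobNorm (s • Φ s + Φ s * (Ψ s - s • 1))
        ≤ frobNorm (s • Φ s) + frobNorm (Φ s * (Ψ s - s • 1)) := Frob.add_le _ _
      _ ≤ s * R₁ + R₁ * h s := by
          have h1 : frobNorm (s • Φ s) = |s| * frobNorm (Φ s) := Frob.smul s (Φ s)
          have h2 := Frob.mul_le (Φ s) (Ψ s - s • 1)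
          have h3 := hΦF s hs
          have h4 : frobNorm (Φ s) * frobNorm (Ψ s - s • 1) ≤ R₁ * h s :=
            mul_le_mul h3 (le_refl _) (hh0 s) hR₁
          have h5 : |s| * frobNorm (Φ s) ≤ s * R₁ := by
            rw [abs_of_nonneg hs.1]
            exact mul_le_mul_of_nonneg_left h3 hs.1
          linarith
      _ = R₁ * (s + h s) := by ring
  -- recursive integral inequality
  have hrec : ∀ g : ℝ → ℝ, ContinuousOn g (Icc 0 δ) →
      (∀ s ∈ Icc (0:ℝ) δ, h s ≤ g s) → (∀ s ∈ Icc (0:ℝ) δ, 0 ≤ g s) →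
      ∀ t ∈ Icc (0:ℝ) δ, h t ≤ ∫ s in (0:ℝ)..t, R₁ * ((t - s) * (s + g s)) := by
    intro g hgc hgle hg0 t ht
    have hsub : Icc (0:ℝ) t ⊆ Icc (0:ℝ) δ := Icc_subset_Icc (le_refl 0) ht.2
    have hFc : ∀ i j, ContinuousOn
        (fun s => ((t - s) • (Φ s * Ψ s)) i j) (Icc 0 t) := by
      intro i j
      simp only [Matrix.smul_apply, smul_eq_mul]
      exact (continuousOn_const.sub continuousOn_id).mul ((hΦΨc i j).mono hsub)
    have hbd : ∀ s ∈ Icc (0:ℝ) t,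
        frobNorm ((t - s) • (Φ s * Ψ s)) ≤ R₁ * ((t - s) * (s + g s)) := by
      intro s hs
      have hs' := hsub hs
      rw [Frob.smul, abs_of_nonneg (by linarith [hs.2] : (0:ℝ) ≤ t - s)]
      have h1 := hprod s hs'
      have h2 : R₁ * (s + h s) ≤ R₁ * (s + g s) :=
        mul_le_mul_of_nonneg_left (by linarith [hgle s hs']) hR₁
      have hts : (0:ℝ) ≤ t - s := by linarith [hs.2]
      calc (t - s) * frobNorm (Φ s * Ψ s) ≤ (t - s) * (R₁ * (s + g s)) := by
            exact mul_le_mul_of_nonneg_left (h1.trans h2) hts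
        _ = R₁ * ((t - s) * (s + g s)) := by ring
    have hbc : ContinuousOn (fun s => R₁ * ((t - s) * (s + g s))) (Icc 0 t) := by
      apply continuousOn_const.mul
      exact (continuousOn_const.sub continuousOn_id).mul
        (continuousOn_id.add (hgc.mono hsub))
    have hle := Frob.norm_integral_le ht.1 hFc hbd hbc
    simp only [Matrix.smul_apply, smul_eq_mul] at hle
    rw [← key t ht] at hle
    exact hle
  -- a priori bound
  obtain ⟨C, hC⟩ := isCompact_Icc.exists_bound_of_continuousOn hhc
  have hC' : ∀ t ∈ Icc (0:ℝ) δ, h t ≤ C := fun t ht =>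
    (le_abs_self _).trans (by simpa using hC t ht)
  have hC0 : 0 ≤ C := (hh0 0).trans (hC' 0 h0mem)
  -- bootstrap
  have hboot : ∀ k : ℕ, ∀ t ∈ Icc (0:ℝ) δ, h t ≤ t / 5 + C / 2 ^ k := by
    intro k
    induction k with
    | zero =>
      intro t ht
      have := hC' t ht
      simp only [pow_zero]
      have ht0 : 0 ≤ t := ht.1
      linarith
    | succ k ih =>
      intro t ht
      set c : ℝ := C / 2 ^ k with hc
      have hc0 : 0 ≤ c := div_nonneg hC0 (by positivity)
      have hg : ∀ s ∈ Icc (0:ℝ) δ, h s ≤ s / 5 + c := ih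
      have hgc : ContinuousOn (fun s : ℝ => s / 5 + c) (Icc 0 δ) :=
        ((continuous_id.div_const 5).add continuous_const).continuousOn
      have hg0 : ∀ s ∈ Icc (0:ℝ) δ, (0:ℝ) ≤ s / 5 + c := fun s hs => by
        have := hs.1; positivity
      have h1 := hrec (fun s => s / 5 + c) hgc hg (by exact hg0) t ht
      have h2 : (∫ s in (0:ℝ)..t, R₁ * ((t - s) * (s + (s / 5 + c))))
          = R₁ * ((6/5) * (t ^ 3 / ((1+1)*(1+2))) + c * (t ^ 2 / ((0+1)*(0+2)))) := by
        rw [show (fun s => R₁ * ((t - s) * (s + (s / 5 + c))))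
            = fun s => R₁ * ((6/5) * ((t - s) * s ^ 1) + c * ((t - s) * s ^ 0)) by
          funext s; ring]
        rw [intervalIntegral.integral_const_mul, Frob.integral_two]
        norm_num
      rw [h2] at h1
      have ht0 : 0 ≤ t := ht.1
      have htδ : t ≤ δ := ht.2
      have hRt : R₁ * t ^ 2 ≤ 1 := by
        have h3 : t ^ 2 ≤ δ ^ 2 := by nlinarith
        nlinarith
      have e1 : R₁ * t ^ 2 * t ≤ 1 * t := mul_le_mul_of_nonneg_right hRt ht0
      have e2 : R₁ * t ^ 2 * c ≤ 1 * c := mul_le_mul_of_nonneg_right hRt hc0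
      have heq2 : C / 2 ^ (k+1) = c / 2 := by
        rw [hc, pow_succ]
        ring
      rw [heq2]
      have hval : R₁ * ((6/5) * (t ^ 3 / ((1+1)*(1+2))) + c * (t ^ 2 / ((0+1)*(0+2))))
          = (R₁ * t ^ 2 * t) / 5 + (R₁ * t ^ 2 * c) / 2 := by norm_num; ring
      rw [hval] at h1
      linarith
  -- limit: h t ≤ t/5
  have hlin : ∀ t ∈ Icc (0:ℝ) δ, h t ≤ t / 5 := by
    intro t ht
    refine le_of_forall_pos_le_add fun ε hε => ?_
    obtain ⟨k, hk⟩ := pow_unbounded_of_one_lt (C / ε) (one_lt_two (α := ℝ))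
    have h2k : (0:ℝ) < 2 ^ k := by positivity
    have : C / 2 ^ k < ε := by
      rw [div_lt_iff₀ h2k]
      calc C = (C / ε) * ε := by field_simp
        _ < 2 ^ k * ε := by exact mul_lt_mul_of_pos_right hk hε
        _ = ε * 2 ^ k := mul_comm _ _
    have := hboot k t ht
    linarith
  -- refinement 1 : h t ≤ R₁ t³/5
  have href1 : ∀ t ∈ Icc (0:ℝ) δ, h t ≤ R₁ * t ^ 3 / 5 := by
    intro t ht
    have hgc : ContinuousOn (fun s : ℝ => s / 5) (Icc 0 δ) :=
      (continuous_id.div_const 5).continuousOn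
    have h1 := hrec (fun s => s / 5) hgc hlin
      (fun s hs => by have := hs.1; positivity) t ht
    have h2 : (∫ s in (0:ℝ)..t, R₁ * ((t - s) * (s + s / 5)))
        = R₁ * ((6/5) * (t ^ 3 / ((1+1)*(1+2))) + 0 * (t ^ 2 / ((0+1)*(0+2)))) := by
      rw [show (fun s => R₁ * ((t - s) * (s + s / 5)))
          = fun s => R₁ * ((6/5) * ((t - s) * s ^ 1) + 0 * ((t - s) * s ^ 0)) by
        funext s; ring]
      rw [intervalIntegral.integral_const_mul, Frob.integral_two]
      norm_num
    rw [h2] at h1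
    calc h t ≤ _ := h1
      _ = R₁ * t ^ 3 / 5 := by norm_num; ring
  -- refinement 2 : h t ≤ R₁ t³/6 + R₁² t⁵/100
  have href2 : ∀ t ∈ Icc (0:ℝ) δ, h t ≤ R₁ * t ^ 3 / 6 + R₁ ^ 2 * t ^ 5 / 100 := by
    intro t ht
    have hgc : ContinuousOn (fun s : ℝ => R₁ * s ^ 3 / 5) (Icc 0 δ) :=
      ((continuous_const.mul (continuous_pow 3)).div_const 5).continuousOn
    have h1 := hrec (fun s => R₁ * s ^ 3 / 5) hgc href1
      (fun s hs => by have := hs.1; positivity) t ht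
    have h2 : (∫ s in (0:ℝ)..t, R₁ * ((t - s) * (s + R₁ * s ^ 3 / 5)))
        = R₁ * (1 * (t ^ 3 / ((1+1)*(1+2))) + (R₁/5) * (t ^ 5 / ((3+1)*(3+2)))) := by
      rw [show (fun s => R₁ * ((t - s) * (s + R₁ * s ^ 3 / 5)))
          = fun s => R₁ * (1 * ((t - s) * s ^ 1) + (R₁/5) * ((t - s) * s ^ 3)) by
        funext s; ring]
      rw [intervalIntegral.integral_const_mul, Frob.integral_two]
      norm_num
    rw [h2] at h1
    calc h t ≤ _ := h1
      _ = R₁ * t ^ 3 / 6 + R₁ ^ 2 * t ^ 5 / 100 := by norm_num; ring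
  -- the matrices A and E
  set A : Matrix (Fin n) (Fin n) ℝ :=
    Matrix.of fun i j => ∫ s in (0:ℝ)..δ, (s * (δ - s) / δ) * Φ s i j with hAdef
  set E : Matrix (Fin n) (Fin n) ℝ :=
    Matrix.of fun i j => ∫ s in (0:ℝ)..δ,
      ((δ - s) / δ) * ((Φ s * (Ψ s - s • (1 : Matrix (Fin n) (Fin n) ℝ))) i j) with hEdef
  -- pointwise on [0,δ] facts
  have hcfac : ∀ s ∈ Icc (0:ℝ) δ, (0:ℝ) ≤ (δ - s) / δ := fun s hs =>
    div_nonneg (by linarith [hs.2]) hδ.le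
  -- the splitting identity
  have hID : (1/δ) • Ψ δ - 1 = A + E := by
    have hkey := key δ hδmem
    ext i j
    have e1 : Ψ δ i j - δ * (1 : Matrix (Fin n) (Fin n) ℝ) i j
        = ∫ s in (0:ℝ)..δ, (δ - s) * ((Φ s * Ψ s) i j) := by
      have := congr_fun (congr_fun hkey i) j
      simpa [Matrix.sub_apply, Matrix.smul_apply, smul_eq_mul, Matrix.of_apply] using this
    have hiA : IntervalIntegrable (fun s => (s * (δ - s) / δ) * Φ s i j)
        MeasureTheory.volume 0 δ := by
      apply ContinuousOn.intervalIntegrable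
      rw [uIcc_of_le hδ.le]
      exact (((continuous_id.mul (continuous_const.sub continuous_id)).div_const
        δ).continuousOn).mul (hΦcont i j)
    have hiE : IntervalIntegrable
        (fun s => ((δ - s) / δ) * ((Φ s * (Ψ s - s • (1 : Matrix (Fin n) (Fin n) ℝ))) i j))
        MeasureTheory.volume 0 δ := by
      apply ContinuousOn.intervalIntegrable
      rw [uIcc_of_le hδ.le]
      exact (((continuous_const.sub continuous_id).div_const δ).continuousOn).mul
        (hΦΨm1c i j)
    have e2 : (A + E) i j = ∫ s in (0:ℝ)..δ,
        ((s * (δ - s) / δ) * Φ s i j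
          + ((δ - s) / δ) * ((Φ s * (Ψ s - s • (1 : Matrix (Fin n) (Fin n) ℝ))) i j)) := by
      rw [Matrix.add_apply, hAdef, hEdef]
      rw [intervalIntegral.integral_add hiA hiE]
      rfl
    have e3 : ∀ s : ℝ, (s * (δ - s) / δ) * Φ s i j
          + ((δ - s) / δ) * ((Φ s * (Ψ s - s • (1 : Matrix (Fin n) (Fin n) ℝ))) i j)
        = (1/δ) * ((δ - s) * ((Φ s * Ψ s) i j)) := by
      intro s
      have hdec : Φ s * Ψ s
          = s • Φ s + Φ s * (Ψ s - s • (1 : Matrix (Fin n) (Fin n) ℝ)) := by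
        rw [mul_sub, Matrix.mul_smul, mul_one]
        abel
      have hentry : (Φ s * Ψ s) i j
          = s * Φ s i j + (Φ s * (Ψ s - s • (1 : Matrix (Fin n) (Fin n) ℝ))) i j := by
        rw [hdec, Matrix.add_apply, Matrix.smul_apply, smul_eq_mul]
      rw [hentry]
      field_simp
    rw [Matrix.sub_apply, Matrix.smul_apply, smul_eq_mul, e2]
    rw [intervalIntegral.integral_congr (g := fun s => (1/δ) * ((δ - s) * ((Φ s * Ψ s) i j)))
      (fun s _ => e3 s)]
    rw [intervalIntegral.integral_const_mul, ← e1]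
    field_simp
  -- bound for A
  have hAb : frobNorm A ≤ δ ^ 2 * R₁ / 6 := by
    have hFc : ∀ i j, ContinuousOn
        (fun s => ((s * (δ - s) / δ) • Φ s) i j) (Icc 0 δ) := by
      intro i j
      simp only [Matrix.smul_apply, smul_eq_mul]
      exact (((continuous_id.mul (continuous_const.sub continuous_id)).div_const
        δ).continuousOn).mul (hΦcont i j)
    have hbd : ∀ s ∈ Icc (0:ℝ) δ,
        frobNorm ((s * (δ - s) / δ) • Φ s) ≤ (s * (δ - s) / δ) * R₁ := by
      intro s hs
      rw [Frob.smul, abs_of_nonneg (by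
        exact div_nonneg (mul_nonneg hs.1 (by linarith [hs.2])) hδ.le)]
      exact mul_le_mul_of_nonneg_left (hΦF s hs)
        (div_nonneg (mul_nonneg hs.1 (by linarith [hs.2])) hδ.le)
    have hbc : ContinuousOn (fun s : ℝ => (s * (δ - s) / δ) * R₁) (Icc 0 δ) :=
      (((continuous_id.mul (continuous_const.sub continuous_id)).div_const
        δ).mul continuous_const).continuousOn
    have hle := Frob.norm_integral_le hδ.le hFc hbd hbc
    simp only [Matrix.smul_apply, smul_eq_mul] at hle
    rw [← hAdef] at hle
    have hval : (∫ s in (0:ℝ)..δ, (s * (δ - s) / δ) * R₁)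
        = δ ^ 2 * R₁ / 6 := by
      rw [show (fun s : ℝ => (s * (δ - s) / δ) * R₁)
          = fun s : ℝ => (R₁/δ) * ((δ - s) * s ^ 1) + 0 * ((δ - s) * s ^ 0) by
        funext s; field_simp; ring]
      rw [Frob.integral_two]
      field_simp
      ring
    rw [hval] at hle
    exact hle
  -- bound for E and its trace
  set ρ : ℝ → ℝ := fun s => ((δ - s) / δ) * (R₁ * (R₁ * s ^ 3 / 6 + R₁ ^ 2 * s ^ 5 / 100))
    with hρdef
  have hρc : ContinuousOn ρ (Icc 0 δ) := by
    apply ContinuousOn.mul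
    · exact ((continuous_const.sub continuous_id).div_const δ).continuousOn
    · apply continuousOn_const.mul
      exact (((continuous_const.mul (continuous_pow 3)).div_const 6).add
        ((continuous_const.mul (continuous_pow 5)).div_const 100)).continuousOn
  have hρbd : ∀ s ∈ Icc (0:ℝ) δ,
      ((δ - s) / δ) * (R₁ * h s) ≤ ρ s := by
    intro s hs
    apply mul_le_mul_of_nonneg_left _ (hcfac s hs)
    exact mul_le_mul_of_nonneg_left (href2 s hs) hR₁
  have hρval : (∫ s in (0:ℝ)..δ, ρ s)
      = (δ ^ 2 * R₁) ^ 2 / 120 + (δ ^ 2 * R₁) ^ 3 / 4200 := by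
    rw [show ρ = fun s : ℝ => (R₁ ^ 2 / (6 * δ)) * ((δ - s) * s ^ 3)
        + (R₁ ^ 3 / (100 * δ)) * ((δ - s) * s ^ 5) by
      funext s; rw [hρdef]; field_simp]
    rw [Frob.integral_two]
    field_simp
    ring
  have hEb : frobNorm E ≤ (δ ^ 2 * R₁) ^ 2 / 120 + (δ ^ 2 * R₁) ^ 3 / 4200 := by
    have hFc : ∀ i j, ContinuousOn
        (fun s => (((δ - s) / δ) •
          (Φ s * (Ψ s - s • (1 : Matrix (Fin n) (Fin n) ℝ)))) i j) (Icc 0 δ) := by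
      intro i j
      simp only [Matrix.smul_apply, smul_eq_mul]
      exact (((continuous_const.sub continuous_id).div_const δ).continuousOn).mul
        (hΦΨm1c i j)
    have hbd : ∀ s ∈ Icc (0:ℝ) δ,
        frobNorm (((δ - s) / δ) •
          (Φ s * (Ψ s - s • (1 : Matrix (Fin n) (Fin n) ℝ)))) ≤ ρ s := by
      intro s hs
      rw [Frob.smul, abs_of_nonneg (hcfac s hs)]
      refine le_trans ?_ (hρbd s hs)
      apply mul_le_mul_of_nonneg_left _ (hcfac s hs)
      calc frobNorm (Φ s * (Ψ s - s • 1))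
          ≤ frobNorm (Φ s) * frobNorm (Ψ s - s • 1) := Frob.mul_le _ _
        _ ≤ R₁ * h s := mul_le_mul (hΦF s hs) (le_refl _) (hh0 s) hR₁
    have hle := Frob.norm_integral_le hδ.le hFc hbd hρc
    simp only [Matrix.smul_apply, smul_eq_mul] at hle
    rw [← hEdef] at hle
    rw [hρval] at hle
    exact hle
  -- trace identities
  have htrE : E.trace = ∫ s in (0:ℝ)..δ,
      ((δ - s) / δ) * (Φ s * (Ψ s - s • (1 : Matrix (Fin n) (Fin n) ℝ))).trace := by
    have hint : ∀ i : Fin n, IntervalIntegrable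
        (fun s => ((δ - s) / δ) *
          ((Φ s * (Ψ s - s • (1 : Matrix (Fin n) (Fin n) ℝ))) i i))
        MeasureTheory.volume 0 δ := by
      intro i
      apply ContinuousOn.intervalIntegrable
      rw [uIcc_of_le hδ.le]
      exact (((continuous_const.sub continuous_id).div_const δ).continuousOn).mul
        (hΦΨm1c i i)
    have h1 : E.trace = ∑ i, ∫ s in (0:ℝ)..δ,
        ((δ - s) / δ) * ((Φ s * (Ψ s - s • (1 : Matrix (Fin n) (Fin n) ℝ))) i i) := by
      rfl
    rw [h1, ← intervalIntegral.integral_finset_sum (fun i _ => hint i)]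
    apply intervalIntegral.integral_congr
    intro s _
    simp [Matrix.trace, Matrix.diag, Finset.mul_sum]
  have htrEb : |E.trace| ≤ (δ ^ 2 * R₁) ^ 2 / 120 + (δ ^ 2 * R₁) ^ 3 / 4200 := by
    rw [htrE, ← hρval]
    have hic : ContinuousOn (fun s => ((δ - s) / δ) *
        (Φ s * (Ψ s - s • (1 : Matrix (Fin n) (Fin n) ℝ))).trace) (Icc 0 δ) := by
      apply ContinuousOn.mul
      · exact ((continuous_const.sub continuous_id).div_const δ).continuousOn
      · unfold Matrix.trace
        apply continuousOn_finset_sum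
        intro i _
        exact hΦΨm1c i i
    have h1 : |∫ s in (0:ℝ)..δ, ((δ - s) / δ) *
          (Φ s * (Ψ s - s • (1 : Matrix (Fin n) (Fin n) ℝ))).trace|
        ≤ ∫ s in (0:ℝ)..δ, |((δ - s) / δ) *
          (Φ s * (Ψ s - s • (1 : Matrix (Fin n) (Fin n) ℝ))).trace| :=
      intervalIntegral.abs_integral_le_integral_abs hδ.le
    have h2 : (∫ s in (0:ℝ)..δ, |((δ - s) / δ) *
          (Φ s * (Ψ s - s • (1 : Matrix (Fin n) (Fin n) ℝ))).trace|)
        ≤ ∫ s in (0:ℝ)..δ, ρ s := by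
      apply intervalIntegral.integral_mono_on hδ.le
      · exact (hic.abs.mono (by rw [uIcc_of_le hδ.le])).intervalIntegrable
      · exact (hρc.mono (by rw [uIcc_of_le hδ.le])).intervalIntegrable
      · intro s hs
        rw [abs_mul, abs_of_nonneg (hcfac s hs)]
        refine le_trans ?_ (hρbd s hs)
        apply mul_le_mul_of_nonneg_left _ (hcfac s hs)
        calc |(Φ s * (Ψ s - s • (1 : Matrix (Fin n) (Fin n) ℝ))).trace|
            ≤ frobNorm (Φ s) * frobNorm (Ψ s - s • 1) := Frob.abs_trace_mul_le _ _
          _ ≤ R₁ * h s := mul_le_mul (hΦF s hs) (le_refl _) (hh0 s) hR₁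
    linarith
  have htrA : A.trace = ∫ t in (0:ℝ)..δ, (t * (δ - t) / δ) * (Φ t).trace := by
    have hint : ∀ i : Fin n, IntervalIntegrable
        (fun s => (s * (δ - s) / δ) * Φ s i i) MeasureTheory.volume 0 δ := by
      intro i
      apply ContinuousOn.intervalIntegrable
      rw [uIcc_of_le hδ.le]
      exact (((continuous_id.mul (continuous_const.sub continuous_id)).div_const
        δ).continuousOn).mul (hΦcont i i)
    have h1 : A.trace = ∑ i, ∫ s in (0:ℝ)..δ, (s * (δ - s) / δ) * Φ s i i := rfl
    rw [h1, ← intervalIntegral.integral_finset_sum (fun i _ => hint i)]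
    apply intervalIntegral.integral_congr
    intro s _
    simp [Matrix.trace, Matrix.diag, Finset.mul_sum]
  -- numeric bounds
  have hx0 : 0 ≤ δ ^ 2 * R₁ := by positivity
  have hx2 : (δ ^ 2 * R₁) ^ 2 ≤ δ ^ 2 * R₁ := by nlinarith
  have hx3 : (δ ^ 2 * R₁) ^ 3 ≤ (δ ^ 2 * R₁) ^ 2 := by nlinarith
  have hBb : frobNorm (A + E) ≤ δ ^ 2 * R₁ / 6
      + ((δ ^ 2 * R₁) ^ 2 / 120 + (δ ^ 2 * R₁) ^ 3 / 4200) := by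
    have := Frob.add_le A E
    linarith
  have hbB5 : δ ^ 2 * R₁ / 6 + ((δ ^ 2 * R₁) ^ 2 / 120 + (δ ^ 2 * R₁) ^ 3 / 4200)
      ≤ 92 / 525 := by
    have h := hx2.trans hδR
    linarith [hx3.trans h]
  have hbB1 : δ ^ 2 * R₁ / 6 + ((δ ^ 2 * R₁) ^ 2 / 120 + (δ ^ 2 * R₁) ^ 3 / 4200)
      < 1 := by linarith [hbB5]
  obtain ⟨hUnit, hlog⟩ := Frob.logdet_estimate (A + E) hBb hbB1
  have hone : (1/δ) • Ψ δ = 1 + (A + E) := by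
    rw [← hID]
    abel
  refine ⟨?_, ?_, ?_⟩
  · rw [hID]
    exact hBb.trans (le_trans hbB5 (by norm_num))
  · have hPsi : Ψ δ = δ • ((1/δ) • Ψ δ) := by
      rw [smul_smul]
      rw [show δ * (1/δ) = 1 by field_simp]
      rw [one_smul]
    rw [hPsi, hone]
    apply (Matrix.isUnit_iff_isUnit_det _).mpr
    rw [Matrix.det_smul]
    apply isUnit_iff_ne_zero.mpr
    apply mul_ne_zero (pow_ne_zero _ hδ0)
    exact ((Matrix.isUnit_iff_isUnit_det _).mp hUnit).ne_zero
  · rw [hone, ← htrA]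
    set bB : ℝ := δ ^ 2 * R₁ / 6 + ((δ ^ 2 * R₁) ^ 2 / 120 + (δ ^ 2 * R₁) ^ 3 / 4200)
      with hbBdef
    have htriangle : |Real.log (1 + (A + E)).det - A.trace|
        ≤ |Real.log (1 + (A + E)).det - (A + E).trace| + |E.trace| := by
      have : Real.log (1 + (A + E)).det - A.trace
          = (Real.log (1 + (A + E)).det - (A + E).trace) + E.trace := by
        rw [Matrix.trace_add]
        ring
      rw [this]
      exact abs_add_le _ _
    -- numeric conclusion
    have hbB0 : 0 ≤ bB := by positivity
    have hbBx : bB ≤ 92/525 * (δ ^ 2 * R₁) := by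
      rw [hbBdef]
      have h := hx2.trans hδR
      have h3 : (δ ^ 2 * R₁) ^ 3 ≤ δ ^ 2 * R₁ := hx3.trans hx2
      have h2 : (δ ^ 2 * R₁) ^ 2 ≤ δ ^ 2 * R₁ := hx2
      linarith
    have hkey1 : bB ^ 2 / (2 * (1 - bB))
        ≤ (92/525 * (δ ^ 2 * R₁)) ^ 2 / (2 * (433/525)) := by
      apply div_le_div₀ (by positivity) (pow_le_pow_left₀ hbB0 hbBx 2) (by norm_num)
      linarith [hbB5]
    have hval2 : (92/525 * (δ ^ 2 * R₁)) ^ 2 / (2 * (433/525))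
        = 4232/227325 * (δ ^ 2 * R₁) ^ 2 := by ring
    rw [hval2] at hkey1
    have hsq0 : 0 ≤ (δ ^ 2 * R₁) ^ 2 := sq_nonneg _
    calc |Real.log (1 + (A + E)).det - A.trace|
        ≤ |Real.log (1 + (A + E)).det - (A + E).trace| + |E.trace| := htriangle
      _ ≤ bB ^ 2 / (2 * (1 - bB))
          + ((δ ^ 2 * R₁) ^ 2 / 120 + (δ ^ 2 * R₁) ^ 3 / 4200) := by
          exact add_le_add hlog htrEb
      _ ≤ (δ ^ 2 * R₁) ^ 2 / 10 := by linarith
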